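/- Let F : ℕ → ℕ be the Fibonacci sequence with F(0) = F(1) = 1 and F(k+2) = F(k+1) + F(k), let m ≥ 1 and J be natural numbers, let r = −2^{−m}, and let z be a real number with |z| ≤ 2. Then |z·∑_{k=0}^{F(J+1)−1} r^k − z/(1 + 2^{−m})| ≤ 2·2^{−m·F(J+1)}. -/

import Mathlib

theorem div_in_error_bound (F : ℕ → ℕ)
    (hF0 : F 0 = 1) (hF1 : F 1 = 1)
    (hF : ∀ k, F (k + 2) = F (k + 1) + F k)
    (m J : ℕ) (hm : 1 ≤ m)
    (r : ℝ) (hr : r = -(2 : ℝ) ^ (-(m : ℤ)))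
    (z : ℝ) (hz : |z| ≤ 2) :
    |z * ∑ k ∈ Finset.range (F (J + 1)), r ^ k - z / (1 + (2 : ℝ) ^ (-(m : ℤ)))| ≤
      2 * (2 : ℝ) ^ (-((m * F (J + 1) : ℕ) : ℤ)) := by
  set N := F (J + 1) with hN
  set t : ℝ := (2 : ℝ) ^ (-(m : ℤ)) with ht
  clear_value t N
  have htpos : 0 < t := by rw [ht]; positivity
  have hr1 : r ≠ 1 := by rw [hr, ht]; nlinarith [htpos]
  have hsum : ∑ k ∈ Finset.range N, r ^ k = (r ^ N - 1) / (r - 1) := geom_sum_eq hr1 N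
  have hden : r - 1 = -(1 + t) := by rw [hr]; ring
  have h1t : (1 : ℝ) + t ≠ 0 := by positivity
  have key : z * ∑ k ∈ Finset.range N, r ^ k - z / (1 + t) = -(z * r ^ N) / (1 + t) := by
    have h1t' : (-1 : ℝ) - t ≠ 0 := by nlinarith
    rw [hsum, hden]
    field_simp [h1t']
    ring
  rw [key, abs_div, abs_neg, abs_mul, abs_of_pos (by positivity : (0:ℝ) < 1 + t)]
  have habs_r : |r| = t := by rw [hr, abs_neg, abs_of_pos htpos]
  have hrpow : |r ^ N| = (2 : ℝ) ^ (-((m * N : ℕ) : ℤ)) := by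
    rw [abs_pow, habs_r, ht, ← zpow_natCast ((2:ℝ) ^ (-(m:ℤ))) N, ← zpow_mul]
    congr 1
    push_cast
    ring
  rw [hrpow]
  rw [div_le_iff₀ (by positivity)]
  have h2 : (0:ℝ) < (2 : ℝ) ^ (-((m * N : ℕ) : ℤ)) := by positivity
  nlinarith [abs_nonneg z, mul_le_mul_of_nonneg_right hz (le_of_lt h2)]
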